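/- (Recursion implies O(1/t) rate.) Let (Δ_t)_{t≥1} be a nonnegative real sequence, θ_t = 2/(t+1), and suppose there exist constants A ≥ 0, B ≥ 0 such that for all t ≥ 1: Δ_{t+1} ≤ Δ_t − (2/3)θ_t Δ_t + θ_t²(A + B·Δ̄_t), where Δ̄_t := ((Σ_{u=1}^t u)^{-1} Σ_{u=1}^t u·√Δ_u)². Then there exists a constant G (depending on A, B, and finitely many initial values Δ_t) such that Δ_t ≤ G/t for all t ≥ 1. -/

import Mathlib

noncomputable section

lemma sum_Icc_cast_real (t : ℕ) :
    (∑ u ∈ Finset.Icc 1 t, (u : ℝ)) = t * (t + 1) / 2 := by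
  induction t with
  | zero => simp
  | succ t ih =>
    rw [Finset.sum_Icc_succ_top (by omega : 1 ≤ t + 1), ih]
    push_cast
    ring

set_option maxHeartbeats 1000000 in
/-- Recursion implies `O(1/t)` rate: if `(Δ_t)_{t ≥ 1}` is nonnegative, `θ_t = 2/(t+1)`,
and for all `t ≥ 1`, `Δ_{t+1} ≤ Δ_t − (2/3) θ_t Δ_t + θ_t² (A + B Δ̄_t)` with
`Δ̄_t = ((Σ_{u=1}^t u)⁻¹ Σ_{u=1}^t u √Δ_u)²`, then there is a constant `G` with
`Δ_t ≤ G / t` for all `t ≥ 1`. -/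
theorem recursion_rate (Δ : ℕ → ℝ) (A B : ℝ) (hA : 0 ≤ A) (hB : 0 ≤ B)
    (hnn : ∀ t : ℕ, 1 ≤ t → 0 ≤ Δ t)
    (hrec : ∀ t : ℕ, 1 ≤ t →
      Δ (t + 1) ≤ Δ t - 2 / 3 * (2 / ((t : ℝ) + 1)) * Δ t
        + (2 / ((t : ℝ) + 1)) ^ 2 *
          (A + B * ((∑ u ∈ Finset.Icc 1 t, (u : ℝ))⁻¹ *
              ∑ u ∈ Finset.Icc 1 t, (u : ℝ) * Real.sqrt (Δ u)) ^ 2)) :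
    ∃ G : ℝ, ∀ t : ℕ, 1 ≤ t → Δ t ≤ G / (t : ℝ) := by
  obtain ⟨N0, hN0⟩ := exists_nat_ge (96 * B)
  set N : ℕ := N0 + 1 with hNdef
  have hN : 96 * B ≤ (N : ℝ) := by rw [hNdef]; push_cast; linarith
  obtain ⟨G, hG0, hG24, base⟩ :
      ∃ G : ℝ, 0 ≤ G ∧ 24 * A ≤ G ∧ ∀ u : ℕ, 1 ≤ u → u ≤ N → Δ u ≤ G / (u : ℝ) := by
    refine ⟨24 * A + ∑ u ∈ Finset.Icc 1 N, (u : ℝ) * Δ u, ?_, ?_, ?_⟩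
    · have hsumnn : 0 ≤ ∑ u ∈ Finset.Icc 1 N, (u : ℝ) * Δ u :=
        Finset.sum_nonneg fun u hu => mul_nonneg (by positivity)
          (hnn u (Finset.mem_Icc.mp hu).1)
      linarith
    · have hsumnn : 0 ≤ ∑ u ∈ Finset.Icc 1 N, (u : ℝ) * Δ u :=
        Finset.sum_nonneg fun u hu => mul_nonneg (by positivity)
          (hnn u (Finset.mem_Icc.mp hu).1)
      linarith
    · intro u h1 h2
      have hu0 : (0 : ℝ) < (u : ℝ) := by exact_mod_cast h1
      have hle : (u : ℝ) * Δ u ≤ ∑ v ∈ Finset.Icc 1 N, (v : ℝ) * Δ v :=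
        Finset.single_le_sum (fun v hv => mul_nonneg (by positivity)
          (hnn v (Finset.mem_Icc.mp hv).1)) (Finset.mem_Icc.mpr ⟨h1, h2⟩)
      rw [le_div_iff₀ hu0]
      linarith [mul_comm (Δ u) (u : ℝ)]
  have key : ∀ t : ℕ, ∀ u : ℕ, 1 ≤ u → u ≤ t → Δ u ≤ G / (u : ℝ) := by
    intro t
    induction t with
    | zero => intro u h1 h0; omega
    | succ t ih =>
      intro u h1 hu
      rcases Nat.lt_or_ge u (t + 1) with h | h
      · exact ih u h1 (by omega)
      · have hu' : u = t + 1 := by omega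
        subst hu'
        by_cases hNle : t + 1 ≤ N
        · exact base _ h1 hNle
        · push_neg at hNle
          have htN : N ≤ t := by omega
          have ht1 : 1 ≤ t := by omega
          have hc1 : (1 : ℝ) ≤ (t : ℝ) := by exact_mod_cast ht1
          have hc0 : (0 : ℝ) < (t : ℝ) := by linarith
          have htB : 96 * B ≤ (t : ℝ) := le_trans hN (by exact_mod_cast htN)
          have hΔt : Δ t ≤ G / (t : ℝ) := ih t ht1 le_rfl
          -- bound on each term of the weighted sum
          have hterm : ∀ u ∈ Finset.Icc 1 t,
              (u : ℝ) * Real.sqrt (Δ u) ≤ Real.sqrt (t : ℝ) * Real.sqrt G := by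
            intro u hu
            obtain ⟨hu1, hut⟩ := Finset.mem_Icc.mp hu
            have hu0 : (0 : ℝ) < (u : ℝ) := by exact_mod_cast hu1
            have h1' : Real.sqrt (Δ u) ≤ Real.sqrt (G / (u : ℝ)) :=
              Real.sqrt_le_sqrt (ih u hu1 hut)
            have h2' : Real.sqrt (G / (u : ℝ)) = Real.sqrt G / Real.sqrt (u : ℝ) :=
              Real.sqrt_div hG0 _
            have hds : (u : ℝ) / Real.sqrt (u : ℝ) = Real.sqrt (u : ℝ) :=
              Real.div_sqrt
            calc (u : ℝ) * Real.sqrt (Δ u)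
                ≤ (u : ℝ) * (Real.sqrt G / Real.sqrt (u : ℝ)) := by
                  rw [← h2']; exact mul_le_mul_of_nonneg_left h1' hu0.le
              _ = (u : ℝ) / Real.sqrt (u : ℝ) * Real.sqrt G := by ring
              _ = Real.sqrt (u : ℝ) * Real.sqrt G := by rw [hds]
              _ ≤ Real.sqrt (t : ℝ) * Real.sqrt G := by
                  have : Real.sqrt (u : ℝ) ≤ Real.sqrt (t : ℝ) :=
                    Real.sqrt_le_sqrt (by exact_mod_cast hut)
                  exact mul_le_mul_of_nonneg_right this (Real.sqrt_nonneg _)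
          have hsumb : (∑ u ∈ Finset.Icc 1 t, (u : ℝ) * Real.sqrt (Δ u))
              ≤ (t : ℝ) * (Real.sqrt (t : ℝ) * Real.sqrt G) := by
            calc (∑ u ∈ Finset.Icc 1 t, (u : ℝ) * Real.sqrt (Δ u))
                ≤ ∑ _u ∈ Finset.Icc 1 t, Real.sqrt (t : ℝ) * Real.sqrt G :=
                  Finset.sum_le_sum hterm
              _ = ((Finset.Icc 1 t).card : ℝ) * (Real.sqrt (t : ℝ) * Real.sqrt G) := by
                  rw [Finset.sum_const, nsmul_eq_mul]
              _ = (t : ℝ) * (Real.sqrt (t : ℝ) * Real.sqrt G) := by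
                  rw [Nat.card_Icc]; norm_num
          have hsnn : 0 ≤ ∑ u ∈ Finset.Icc 1 t, (u : ℝ) * Real.sqrt (Δ u) :=
            Finset.sum_nonneg fun u hu => mul_nonneg (by positivity) (Real.sqrt_nonneg _)
          set S : ℝ := (∑ u ∈ Finset.Icc 1 t, (u : ℝ))⁻¹ *
              ∑ u ∈ Finset.Icc 1 t, (u : ℝ) * Real.sqrt (Δ u) with hSdef
          have hS0 : 0 ≤ S := by
            apply mul_nonneg _ hsnn
            rw [sum_Icc_cast_real]
            positivity
          have hSle : S ≤ 2 * Real.sqrt (t : ℝ) * Real.sqrt G / ((t : ℝ) + 1) := by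
            rw [hSdef, sum_Icc_cast_real]
            have hinv : (0 : ℝ) ≤ ((t : ℝ) * ((t : ℝ) + 1) / 2)⁻¹ := by positivity
            calc ((t : ℝ) * ((t : ℝ) + 1) / 2)⁻¹ *
                  ∑ u ∈ Finset.Icc 1 t, (u : ℝ) * Real.sqrt (Δ u)
                ≤ ((t : ℝ) * ((t : ℝ) + 1) / 2)⁻¹ *
                  ((t : ℝ) * (Real.sqrt (t : ℝ) * Real.sqrt G)) :=
                  mul_le_mul_of_nonneg_left hsumb hinv
              _ = 2 * Real.sqrt (t : ℝ) * Real.sqrt G / ((t : ℝ) + 1) := by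
                  field_simp
          have hS2 : S ^ 2 ≤ 4 * G / (t : ℝ) := by
            have h1 : S ^ 2 ≤ (2 * Real.sqrt (t : ℝ) * Real.sqrt G / ((t : ℝ) + 1)) ^ 2 :=
              pow_le_pow_left₀ hS0 hSle 2
            have h2 : (2 * Real.sqrt (t : ℝ) * Real.sqrt G / ((t : ℝ) + 1)) ^ 2
                = 4 * (t : ℝ) * G / ((t : ℝ) + 1) ^ 2 := by
              rw [div_pow, mul_pow, mul_pow, Real.sq_sqrt hc0.le, Real.sq_sqrt hG0]
              norm_num
            have h3 : 4 * (t : ℝ) * G / ((t : ℝ) + 1) ^ 2 ≤ 4 * G / (t : ℝ) := by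
              rw [div_le_div_iff₀ (by positivity) hc0]
              nlinarith [mul_nonneg hG0 hc0.le, hG0]
            linarith
          have hrec' := hrec t ht1
          rw [← hSdef] at hrec'
          have hcoef : 0 ≤ 1 - 4 / (3 * ((t : ℝ) + 1)) := by
            have : 4 / (3 * ((t : ℝ) + 1)) ≤ 4 / 6 := by
              apply div_le_div_of_nonneg_left (by norm_num) (by norm_num) (by linarith)
            linarith
          have h4 : Δ (t + 1) ≤ G / (t : ℝ) * (1 - 4 / (3 * ((t : ℝ) + 1)))
              + 4 / ((t : ℝ) + 1) ^ 2 * (A + B * (4 * G / (t : ℝ))) := by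
            have e1 : Δ t - 2 / 3 * (2 / ((t : ℝ) + 1)) * Δ t
                = Δ t * (1 - 4 / (3 * ((t : ℝ) + 1))) := by
              have hne : ((t : ℝ) + 1) ≠ 0 := by positivity
              field_simp
              ring
            have e2 : (2 / ((t : ℝ) + 1)) ^ 2 = 4 / ((t : ℝ) + 1) ^ 2 := by
              rw [div_pow]; norm_num
            calc Δ (t + 1)
                ≤ Δ t * (1 - 4 / (3 * ((t : ℝ) + 1)))
                  + 4 / ((t : ℝ) + 1) ^ 2 * (A + B * S ^ 2) := by
                  rw [← e1, ← e2]; exact hrec'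
              _ ≤ G / (t : ℝ) * (1 - 4 / (3 * ((t : ℝ) + 1)))
                  + 4 / ((t : ℝ) + 1) ^ 2 * (A + B * (4 * G / (t : ℝ))) := by
                  apply add_le_add
                  · exact mul_le_mul_of_nonneg_right hΔt hcoef
                  · apply mul_le_mul_of_nonneg_left _ (by positivity)
                    exact add_le_add (le_refl A) (mul_le_mul_of_nonneg_left hS2 hB)
          have hkey : 12 * A * (t : ℝ) + 48 * B * G ≤ G * ((t : ℝ) + 1) := by
            nlinarith [mul_le_mul_of_nonneg_right hG24 hc0.le,
              mul_le_mul_of_nonneg_right htB hG0]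
          have hid : G / ((t : ℝ) + 1)
              - (G / (t : ℝ) * (1 - 4 / (3 * ((t : ℝ) + 1)))
                + 4 / ((t : ℝ) + 1) ^ 2 * (A + B * (4 * G / (t : ℝ))))
              = (G * ((t : ℝ) + 1) - (12 * A * (t : ℝ) + 48 * B * G))
                / (3 * (t : ℝ) * ((t : ℝ) + 1) ^ 2) := by
            field_simp
            ring
          have hnum : 0 ≤ (G * ((t : ℝ) + 1) - (12 * A * (t : ℝ) + 48 * B * G))
              / (3 * (t : ℝ) * ((t : ℝ) + 1) ^ 2) :=
            div_nonneg (by linarith) (by positivity)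
          have : Δ (t + 1) ≤ G / ((t : ℝ) + 1) := by linarith
          push_cast
          exact this
  exact ⟨G, fun t ht => key t t ht le_rfl⟩
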